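/- The matrices A = [[1,2],[0,1]] and B = [[1,0],[2,1]] generate a free subgroup of rank 2 in SL(2,ℤ): the group homomorphism from the free group on two generators to SL(2,ℤ) sending the two generators to A and B respectively is injective. -/

import Mathlib

/-- The matrix `[[1,2],[0,1]]` as an element of `SL(2,ℤ)`. -/
def matA : Matrix.SpecialLinearGroup (Fin 2) ℤ :=
  ⟨!![1, 2; 0, 1], by norm_num [Matrix.det_fin_two_of]⟩

/-- The matrix `[[1,0],[2,1]]` as an element of `SL(2,ℤ)`. -/
def matB : Matrix.SpecialLinearGroup (Fin 2) ℤ :=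
  ⟨!![1, 0; 2, 1], by norm_num [Matrix.det_fin_two_of]⟩

section PingPongSL2

open UpperHalfPlane Matrix Complex



private lemma coe_matA_smul (z : ℍ) : ((matA • z : ℍ) : ℂ) = z + 2 := by
  rw [UpperHalfPlane.specialLinearGroup_apply, UpperHalfPlane.coe_mk]
  simp [matA]

private lemma coe_matB_smul (z : ℍ) : ((matB • z : ℍ) : ℂ) = z / (2 * z + 1) := by
  rw [UpperHalfPlane.specialLinearGroup_apply, UpperHalfPlane.coe_mk]
  simp [matB]

private lemma matA_inv : matA⁻¹ = (⟨!![1, -2; 0, 1], by norm_num [Matrix.det_fin_two_of]⟩ :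
    Matrix.SpecialLinearGroup (Fin 2) ℤ) := by
  rw [Matrix.SpecialLinearGroup.SL2_inv_expl]
  ext i j
  fin_cases i <;> fin_cases j <;> simp [matA]

private lemma matB_inv : matB⁻¹ = (⟨!![1, 0; -2, 1], by norm_num [Matrix.det_fin_two_of]⟩ :
    Matrix.SpecialLinearGroup (Fin 2) ℤ) := by
  rw [Matrix.SpecialLinearGroup.SL2_inv_expl]
  ext i j
  fin_cases i <;> fin_cases j <;> simp [matB]

private lemma coe_matA_inv_smul (z : ℍ) : ((matA⁻¹ • z : ℍ) : ℂ) = z - 2 := by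
  rw [UpperHalfPlane.specialLinearGroup_apply, UpperHalfPlane.coe_mk, matA_inv]
  simp
  ring

private lemma coe_matB_inv_smul (z : ℍ) : ((matB⁻¹ • z : ℍ) : ℂ) = z / (-2 * z + 1) := by
  rw [UpperHalfPlane.specialLinearGroup_apply, UpperHalfPlane.coe_mk, matB_inv]
  simp

private lemma denom1_ne (z : ℍ) : (2 * (z : ℂ) + 1) ≠ 0 := by
  intro h
  have h2 : (2 * (z : ℂ) + 1).im = 0 := by rw [h]; simp
  simp [Complex.add_im, Complex.mul_im] at h2
  exact z.im_ne_zero h2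

private lemma denom2_ne (z : ℍ) : (-2 * (z : ℂ) + 1) ≠ 0 := by
  intro h
  have h2 : (-2 * (z : ℂ) + 1).im = 0 := by rw [h]; simp
  simp [Complex.add_im, Complex.mul_im] at h2
  exact z.im_ne_zero h2

private lemma key1 (z : ℍ) : 2 * ((matB • z : ℍ) : ℂ) - 1 = -(2 * (z : ℂ) + 1)⁻¹ := by
  rw [coe_matB_smul]
  linear_combination mul_inv_cancel₀ (denom1_ne z)

private lemma key2 (z : ℍ) : 2 * ((matB⁻¹ • z : ℍ) : ℂ) + 1 = (-2 * (z : ℂ) + 1)⁻¹ := by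
  rw [coe_matB_inv_smul]
  linear_combination (-1 : ℂ) * mul_inv_cancel₀ (denom2_ne z)

private lemma abs_le_one_iff' (w : ℂ) : ‖w‖ ≤ 1 ↔ Complex.normSq w ≤ 1 := by
  rw [← Complex.sq_norm]
  constructor
  · intro h; nlinarith [norm_nonneg w]
  · intro h; nlinarith [norm_nonneg w]

theorem free_subgroup_of_SL2Z :
    Function.Injective
      ⇑(FreeGroup.lift ![matA, matB] : FreeGroup (Fin 2) →* Matrix.SpecialLinearGroup (Fin 2) ℤ) := by
  classical
  set X : Fin 2 → Set ℍ :=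
    ![{z | 1 ≤ z.re}, {z | ‖2 * (z : ℂ) - 1‖ ≤ 1}] with hXdef
  set Y : Fin 2 → Set ℍ :=
    ![{z | z.re ≤ -1}, {z | ‖2 * (z : ℂ) + 1‖ ≤ 1}] with hYdef
  have him : ∀ z : ℍ, 0 < z.im := fun z => z.2
  have hre : ∀ z : ℍ, z.re = (z : ℂ).re := fun z => rfl
  have him' : ∀ z : ℍ, z.im = (z : ℂ).im := fun z => rfl
  have hnsq1 : ∀ z : ℍ, Complex.normSq (2 * (z : ℂ) - 1)
      = (2 * z.re - 1) ^ 2 + (2 * z.im) ^ 2 := by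
    intro z
    rw [Complex.normSq_apply]
    rw [hre, him']
    simp [Complex.sub_re, Complex.sub_im, Complex.mul_re, Complex.mul_im]
    ring
  have hnsq2 : ∀ z : ℍ, Complex.normSq (2 * (z : ℂ) + 1)
      = (2 * z.re + 1) ^ 2 + (2 * z.im) ^ 2 := by
    intro z
    rw [Complex.normSq_apply]
    rw [hre, him']
    simp [Complex.add_re, Complex.add_im, Complex.mul_re, Complex.mul_im]
    ring
  -- the basic incompatibilities between the four sets
  have dXX : ∀ z : ℍ, 1 ≤ z.re → ‖2 * (z : ℂ) - 1‖ ≤ 1 → False := by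
    intro z h1 h2
    rw [abs_le_one_iff', hnsq1] at h2
    nlinarith [him z]
  have dYY : ∀ z : ℍ, z.re ≤ -1 → ‖2 * (z : ℂ) + 1‖ ≤ 1 → False := by
    intro z h1 h2
    rw [abs_le_one_iff', hnsq2] at h2
    nlinarith [him z]
  have dX0Y0 : ∀ z : ℍ, 1 ≤ z.re → z.re ≤ -1 → False := fun z h1 h2 => by linarith
  have dX0Y1 : ∀ z : ℍ, 1 ≤ z.re → ‖2 * (z : ℂ) + 1‖ ≤ 1 → False := by
    intro z h1 h2
    rw [abs_le_one_iff', hnsq2] at h2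
    nlinarith [him z]
  have dX1Y0 : ∀ z : ℍ, ‖2 * (z : ℂ) - 1‖ ≤ 1 → z.re ≤ -1 → False := by
    intro z h1 h2
    rw [abs_le_one_iff', hnsq1] at h1
    nlinarith [him z]
  have dX1Y1 : ∀ z : ℍ, ‖2 * (z : ℂ) - 1‖ ≤ 1 →
      ‖2 * (z : ℂ) + 1‖ ≤ 1 → False := by
    intro z h1 h2
    rw [abs_le_one_iff', hnsq1] at h1
    rw [abs_le_one_iff', hnsq2] at h2
    nlinarith [him z]
  apply FreeGroup.injective_lift_of_ping_pong ![matA, matB] X Y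
  · -- nonempty
    intro i
    fin_cases i
    · refine ⟨⟨⟨1, 1⟩, by norm_num⟩, ?_⟩
      show (1 : ℝ) ≤ UpperHalfPlane.re _
      rw [hre]
    · refine ⟨⟨⟨1/2, 1/2⟩, by norm_num⟩, ?_⟩
      show ‖2 * _ - 1‖ ≤ 1
      rw [abs_le_one_iff']
      rw [Complex.normSq_apply]
      norm_num [Complex.sub_re, Complex.sub_im, Complex.mul_re, Complex.mul_im,
        UpperHalfPlane.coe_mk]
  · -- X pairwise disjoint
    intro i j hij
    fin_cases i <;> fin_cases j
    · exact absurd rfl hij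
    · rw [Function.onFun, Set.disjoint_left]
      intro z h1 h2
      exact dXX z h1 h2
    · rw [Function.onFun, Set.disjoint_left]
      intro z h1 h2
      exact dXX z h2 h1
    · exact absurd rfl hij
  · -- Y pairwise disjoint
    intro i j hij
    fin_cases i <;> fin_cases j
    · exact absurd rfl hij
    · rw [Function.onFun, Set.disjoint_left]
      intro z h1 h2
      exact dYY z h1 h2
    · rw [Function.onFun, Set.disjoint_left]
      intro z h1 h2
      exact dYY z h2 h1
    · exact absurd rfl hij
  · -- X i disjoint from Y j
    intro i j
    fin_cases i <;> fin_cases j <;> rw [Set.disjoint_left] <;> intro z h1 h2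
    · exact dX0Y0 z h1 h2
    · exact dX0Y1 z h1 h2
    · exact dX1Y0 z h1 h2
    · exact dX1Y1 z h1 h2
  · -- hX : a i • (Y i)ᶜ ⊆ X i
    intro i
    fin_cases i
    · rintro x ⟨z, hz, rfl⟩
      have hz' : ¬ z.re ≤ -1 := hz
      show (1 : ℝ) ≤ ((matA • z : ℍ) : ℂ).re
      rw [coe_matA_smul]
      rw [hre] at hz'
      have h2 : ((2 : ℂ)).re = 2 := rfl
      rw [Complex.add_re, h2]
      linarith
    · rintro x ⟨z, hz, rfl⟩
      have hz' : ¬ ‖2 * (z : ℂ) + 1‖ ≤ 1 := hz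
      push_neg at hz'
      show ‖2 * ((matB • z : ℍ) : ℂ) - 1‖ ≤ 1
      rw [key1, norm_neg, norm_inv]
      exact inv_le_one_of_one_le₀ hz'.le
  · -- hY : a⁻¹ i • (X i)ᶜ ⊆ Y i
    intro i
    fin_cases i
    · rintro x ⟨z, hz, rfl⟩
      have hz' : ¬ (1 : ℝ) ≤ z.re := hz
      show ((matA⁻¹ • z : ℍ) : ℂ).re ≤ -1
      rw [coe_matA_inv_smul]
      rw [hre] at hz'
      have h2 : ((2 : ℂ)).re = 2 := rfl
      rw [Complex.sub_re, h2]
      linarith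
    · rintro x ⟨z, hz, rfl⟩
      have hz' : ¬ ‖2 * (z : ℂ) - 1‖ ≤ 1 := hz
      push_neg at hz'
      show ‖2 * ((matB⁻¹ • z : ℍ) : ℂ) + 1‖ ≤ 1
      rw [key2, norm_inv]
      have h1 : 1 ≤ ‖-2 * (z : ℂ) + 1‖ := by
        have : (-2 * (z : ℂ) + 1) = -(2 * (z : ℂ) - 1) := by ring
        rw [this, norm_neg]
        exact hz'.le
      exact inv_le_one_of_one_le₀ h1
end PingPongSL2
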